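/- Let n ≥ 3, let a < b be real numbers, and let f : [a,b] → ℝ be a concave function with f(t) > 0 for all t ∈ [a,b]. Define the convex body of revolution K_f = {x ∈ ℝⁿ : x₁ ∈ [a,b] and x₂² + ⋯ + x_n² ≤ f(x₁)²}. Let P₂(K_f) ⊂ ℝ^{n−1} and P₃(K_f) ⊂ ℝ^{n−1} be the images of K_f under deleting the 2nd, respectively 3rd, coordinate, and let P_{23}(K_f) ⊂ ℝ^{n−2} be the image under deleting both the 2nd and 3rd coordinates. Then (n/(n−1)) · vol_{n−2}(P_{23}(K_f)) · vol_n(K_f) > vol_{n−1}(P₂(K_f)) · vol_{n−1}(P₃(K_f)). -/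

import Mathlib

open MeasureTheory

/-- Coordinate projection deleting the coordinate of index `i` (0-based). -/
noncomputable def delCoord {n : ℕ} (i : Fin n) (x : EuclideanSpace ℝ (Fin n)) :
    EuclideanSpace ℝ (Fin (n - 1)) :=
  WithLp.toLp 2 fun j => if (j : ℕ) < (i : ℕ) then x ⟨j, by have := j.2; omega⟩
    else x ⟨(j : ℕ) + 1, by have := j.2; omega⟩

/-- Coordinate projection deleting the two coordinates of indices 1 and 2 (0-based),
i.e. the 2nd and 3rd coordinates. -/
noncomputable def delCoord23 {n : ℕ} (x : EuclideanSpace ℝ (Fin n)) :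
    EuclideanSpace ℝ (Fin (n - 2)) :=
  WithLp.toLp 2 fun j => if (j : ℕ) < 1 then x ⟨j, by have := j.2; omega⟩
    else x ⟨(j : ℕ) + 2, by have := j.2; omega⟩

/-- The body of revolution `K_f = {x : x₁ ∈ [a,b], x₂²+⋯+x_n² ≤ f(x₁)²}`. -/
def bodyOfRevolution (n : ℕ) (hn : 0 < n) (a b : ℝ) (f : ℝ → ℝ) :
    Set (EuclideanSpace ℝ (Fin n)) :=
  {x | x ⟨0, hn⟩ ∈ Set.Icc a b ∧
    ∑ i ∈ Finset.univ.filter (fun i : Fin n => 0 < (i : ℕ)), (x i) ^ 2 ≤ (f (x ⟨0, hn⟩)) ^ 2}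

section Aux
open Real

set_option linter.unreachableTactic false
set_option linter.unusedTactic false
set_option linter.unnecessarySeqFocus false

lemma gamma_sq_lt (x : ℝ) (hx : 0 < x) :
    Gamma (x + 1) ^ 2 < Gamma (x + 1/2) * Gamma (x + 3/2) := by
  by_contra hcon
  push_neg at hcon
  -- positivity facts
  have p1 : 0 < Gamma (x + 1/2) := Gamma_pos_of_pos (by linarith)
  have p2 : 0 < Gamma (x + 1) := Gamma_pos_of_pos (by linarith)
  have p3 : 0 < Gamma (x + 3/2) := Gamma_pos_of_pos (by linarith)
  have p4 : 0 < Gamma (x + 2) := Gamma_pos_of_pos (by linarith)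
  have p5 : 0 < Gamma (x + 5/2) := Gamma_pos_of_pos (by linarith)
  -- functional equations
  have e1 : Gamma (x + 2) = (x+1) * Gamma (x+1) := by
    have := Gamma_add_one (s := x + 1) (by positivity)
    rw [show x + 1 + 1 = x + 2 by ring] at this; exact this
  have e2 : Gamma (x + 5/2) = (x+3/2) * Gamma (x+3/2) := by
    have := Gamma_add_one (s := x + 3/2) (by positivity)
    rw [show x + 3/2 + 1 = x + 5/2 by ring] at this; exact this
  have e3 : Gamma (x + 3/2) = (x+1/2) * Gamma (x+1/2) := by
    have := Gamma_add_one (s := x + 1/2) (by positivity)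
    rw [show x + 1/2 + 1 = x + 3/2 by ring] at this; exact this
  -- midpoint convexity at x+3/2, x+5/2
  have hconv := convexOn_log_Gamma.2 (Set.mem_Ioi.2 (show (0:ℝ) < x + 3/2 by linarith))
      (Set.mem_Ioi.2 (show (0:ℝ) < x + 5/2 by linarith))
      (by norm_num : (0:ℝ) ≤ 1/2) (by norm_num : (0:ℝ) ≤ 1/2) (by norm_num)
  simp only [Function.comp_apply, smul_eq_mul] at hconv
  have hmid : (1/2 : ℝ) * (x + 3/2) + (1/2 : ℝ) * (x + 5/2) = x + 2 := by ring
  rw [hmid] at hconv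
  -- exponentiate: Γ(x+2)^2 ≤ Γ(x+3/2)Γ(x+5/2)
  have key : Gamma (x+2) ^ 2 ≤ Gamma (x+3/2) * Gamma (x+5/2) := by
    have h2 : (2:ℝ) * log (Gamma (x+2)) ≤ log (Gamma (x+3/2)) + log (Gamma (x+5/2)) := by
      linarith
    have : log (Gamma (x+2) ^ 2) ≤ log (Gamma (x+3/2) * Gamma (x+5/2)) := by
      rw [Real.log_pow, Real.log_mul p3.ne' p5.ne']; push_cast; linarith
    exact (Real.log_le_log_iff (by positivity) (by positivity)).1 this
  rw [e1, e2] at key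
  -- key : ((x+1) Γ(x+1))² ≤ Γ(x+3/2) (x+3/2) Γ(x+3/2)
  -- hcon : Γ(x+1/2)Γ(x+3/2) ≤ Γ(x+1)²
  -- e3 : Γ(x+3/2) = (x+1/2)Γ(x+1/2)
  nlinarith [sq_nonneg (Gamma (x+1)), sq_nonneg (x+1), mul_pos p1 p3,
    mul_pos (mul_pos p1 p1) p3, sq_nonneg (Gamma (x+1/2))]


noncomputable def ballC (k : ℕ) : ℝ := Real.sqrt π ^ k / Gamma (k / 2 + 1)

lemma ballC_pos (k : ℕ) : 0 < ballC k := by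
  have h1 : (0:ℝ) < Real.sqrt π := Real.sqrt_pos.2 pi_pos
  have h2 : (0:ℝ) < Gamma (k / 2 + 1) := Gamma_pos_of_pos (by positivity)
  exact div_pos (pow_pos h1 k) h2

lemma ballC_ineq (m : ℕ) :
    ballC (m+1) ^ 2 < ((m:ℝ) + 3) / ((m:ℝ) + 2) * ballC m * ballC (m+2) := by
  have hu0 : 0 ≤ (m:ℝ) := Nat.cast_nonneg m
  set u : ℝ := ((m : ℕ) : ℝ) with hu
  have hg : Gamma ((u+2)/2) * Gamma ((u+4)/2) * (u+2) < (u+3) * Gamma ((u+3)/2) ^ 2 := by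
    have hA := gamma_sq_lt ((u+2)/2) (by positivity)
    rw [show (u+2)/2 + 1 = (u+4)/2 by ring, show (u+2)/2 + 1/2 = (u+3)/2 by ring,
      show (u+2)/2 + 3/2 = (u+5)/2 by ring] at hA
    have e1 : Gamma ((u+5)/2) = ((u+3)/2) * Gamma ((u+3)/2) := by
      have := Gamma_add_one (s := (u+3)/2) (by positivity)
      rw [show (u+3)/2 + 1 = (u+5)/2 by ring] at this; exact this
    have e2 : Gamma ((u+4)/2) = ((u+2)/2) * Gamma ((u+2)/2) := by
      have := Gamma_add_one (s := (u+2)/2) (by positivity)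
      rw [show (u+2)/2 + 1 = (u+4)/2 by ring] at this; exact this
    rw [e1] at hA
    have p3 : 0 < Gamma ((u+3)/2) := Gamma_pos_of_pos (by positivity)
    calc Gamma ((u+2)/2) * Gamma ((u+4)/2) * (u+2)
        = 2 * Gamma ((u+4)/2) ^ 2 := by rw [e2]; ring
      _ < 2 * (Gamma ((u+3)/2) * (((u+3)/2) * Gamma ((u+3)/2))) := by nlinarith
      _ = (u+3) * Gamma ((u+3)/2)^2 := by ring
  unfold ballC
  push_cast
  rw [show ((m:ℝ)+1)/2 + 1 = (u+3)/2 by rw [← hu]; ring,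
    show (m:ℝ)/2 + 1 = (u+2)/2 by rw [← hu]; ring,
    show ((m:ℝ)+2)/2 + 1 = (u+4)/2 by rw [← hu]; ring]
  have p2 : 0 < Gamma ((u+2)/2) := Gamma_pos_of_pos (by positivity)
  have p3 : 0 < Gamma ((u+3)/2) := Gamma_pos_of_pos (by positivity)
  have p4 : 0 < Gamma ((u+4)/2) := Gamma_pos_of_pos (by positivity)
  have hsp : (0:ℝ) < Real.sqrt π := Real.sqrt_pos.2 pi_pos
  have hpow : (Real.sqrt π ^ (m+1)) ^ 2 = Real.sqrt π ^ m * Real.sqrt π ^ (m+2) := by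
    rw [← pow_mul, ← pow_add]; ring_nf
  have hum : (0:ℝ) < u + 2 := by positivity
  rw [show (u+3)/(u+2) * (Real.sqrt π ^ m / Gamma ((u+2)/2)) *
       (Real.sqrt π ^ (m+2) / Gamma ((u+4)/2))
      = ((u+3) * (Real.sqrt π ^ m * Real.sqrt π ^ (m+2))) /
        ((u+2) * (Gamma ((u+2)/2) * Gamma ((u+4)/2))) from by field_simp]
  rw [div_pow, div_lt_div_iff₀ (by positivity) (by positivity), hpow]
  nlinarith [mul_pos (pow_pos hsp m) (pow_pos hsp (m+2)), hg,
    mul_lt_mul_of_pos_left hg (mul_pos (pow_pos hsp m) (pow_pos hsp (m+2)))]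

lemma volume_univ_euclid0 : (volume : Measure (EuclideanSpace ℝ (Fin 0))) Set.univ = 1 := by
  have h := (EuclideanSpace.volume_preserving_symm_measurableEquiv_toLp (Fin 0)).measure_preimage
    (MeasurableSet.univ.nullMeasurableSet (μ := (volume : Measure (Fin 0 → ℝ))))
  rw [Set.preimage_univ] at h
  rw [h, MeasureTheory.volume_pi, Measure.pi_univ]
  simp

lemma volume_closedBall' (k : ℕ) (r : ℝ) (hr : 0 ≤ r) :
    volume (Metric.closedBall (0 : EuclideanSpace ℝ (Fin k)) r)
      = (ENNReal.ofReal r) ^ k * ENNReal.ofReal (ballC k) := by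
  cases k with
  | zero =>
      have : Metric.closedBall (0 : EuclideanSpace ℝ (Fin 0)) r = Set.univ := by
        ext y
        simp [Metric.mem_closedBall, Subsingleton.elim y 0, dist_self, hr]
      rw [this, volume_univ_euclid0]
      simp [ballC, Real.Gamma_one]
  | succ m =>
      rw [EuclideanSpace.volume_closedBall]
      simp [ballC, Fintype.card_fin]

lemma sum_filter_pos {k : ℕ} (h : Fin (k+1) → ℝ) :
    ∑ i ∈ Finset.univ.filter (fun i : Fin (k+1) => 0 < (i:ℕ)), h i
      = ∑ j : Fin k, h j.succ := by
  rw [Finset.sum_filter, Fin.sum_univ_succ]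
  simp

-- the measure preserving splitting map
lemma mp_split (k : ℕ) :
    MeasurePreserving
      (fun x : EuclideanSpace ℝ (Fin (k+1)) =>
        ((x 0, WithLp.toLp 2 (fun j : Fin k => x j.succ)) : ℝ × EuclideanSpace ℝ (Fin k)))
      volume volume := by
  have h1 := EuclideanSpace.volume_preserving_symm_measurableEquiv_toLp (Fin (k+1))
  have h2 := MeasureTheory.volume_preserving_piFinSuccAbove (fun _ : Fin (k+1) => ℝ) 0
  have h3 := (MeasurePreserving.id (volume : Measure ℝ)).prod
    ((EuclideanSpace.volume_preserving_symm_measurableEquiv_toLp (Fin k)).symm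
      (MeasurableEquiv.toLp 2 (Fin k → ℝ)).symm)
  exact (h3.comp h2).comp h1

lemma volume_body (k : ℕ) (a b : ℝ) (g : ℝ → ℝ) (hg : Measurable g) (hg0 : ∀ t, 0 ≤ g t) :
    volume {x : EuclideanSpace ℝ (Fin (k+1)) | x 0 ∈ Set.Ioo a b ∧
        ∑ i ∈ Finset.univ.filter (fun i : Fin (k+1) => 0 < (i:ℕ)), (x i)^2 ≤ g (x 0) ^ 2}
      = ENNReal.ofReal (ballC k) *
          ∫⁻ t in Set.Ioo a b, (ENNReal.ofReal (g t)) ^ k := by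
  set T : Set (ℝ × EuclideanSpace ℝ (Fin k)) :=
    {p | p.1 ∈ Set.Ioo a b ∧ ‖p.2‖ ≤ g p.1} with hTdef
  have hT : MeasurableSet T :=
    (measurableSet_Ioo.preimage measurable_fst).inter
      (measurableSet_le (measurable_norm.comp measurable_snd) (hg.comp measurable_fst))
  have hpre : (fun x : EuclideanSpace ℝ (Fin (k+1)) =>
      ((x 0, WithLp.toLp 2 (fun j : Fin k => x j.succ)) : ℝ × EuclideanSpace ℝ (Fin k))) ⁻¹' T
      = {x : EuclideanSpace ℝ (Fin (k+1)) | x 0 ∈ Set.Ioo a b ∧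
        ∑ i ∈ Finset.univ.filter (fun i : Fin (k+1) => 0 < (i:ℕ)), (x i)^2 ≤ g (x 0) ^ 2} := by
    ext x
    simp only [hTdef, Set.mem_preimage, Set.mem_setOf_eq]
    refine and_congr Iff.rfl ?_
    rw [sum_filter_pos (fun i => (x i)^2)]
    rw [EuclideanSpace.norm_eq]
    rw [show g (x 0) = Real.sqrt (g (x 0) ^ 2) by rw [Real.sqrt_sq (hg0 _)]]
    rw [Real.sqrt_le_sqrt_iff (by positivity), Real.sq_sqrt (by positivity)]
    simp [Real.norm_eq_abs, sq_abs]
  rw [← hpre, (mp_split k).measure_preimage hT.nullMeasurableSet]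
  rw [MeasureTheory.Measure.volume_eq_prod, Measure.prod_apply hT]
  have hsec : ∀ t : ℝ, (volume : Measure (EuclideanSpace ℝ (Fin k))) (Prod.mk t ⁻¹' T)
      = (Set.Ioo a b).indicator
          (fun t => (ENNReal.ofReal (g t)) ^ k * ENNReal.ofReal (ballC k)) t := by
    intro t
    by_cases ht : t ∈ Set.Ioo a b
    · rw [Set.indicator_of_mem ht]
      have : Prod.mk t ⁻¹' T = Metric.closedBall (0 : EuclideanSpace ℝ (Fin k)) (g t) := by
        ext y
        simp [hTdef, ht.1, ht.2, Metric.mem_closedBall, dist_zero_right]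
      rw [this, volume_closedBall' k (g t) (hg0 t)]
    · rw [Set.indicator_of_notMem ht]
      have : Prod.mk t ⁻¹' T = ∅ := by
        ext y
        simp only [hTdef, Set.mem_preimage, Set.mem_setOf_eq, Set.mem_empty_iff_false, iff_false]
        exact fun h => ht h.1
      rw [this, measure_empty]
  rw [lintegral_congr hsec, lintegral_indicator measurableSet_Ioo]
  have hmeas : Measurable fun t : ℝ => ENNReal.ofReal (g t) ^ k :=
    (Measurable.ennreal_ofReal hg).pow_const k
  rw [lintegral_mul_const _ hmeas]
  ring

/-- extension of a vector to a function on `ℕ` by zero -/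
noncomputable def ext0 {k : ℕ} (x : EuclideanSpace ℝ (Fin k)) : ℕ → ℝ :=
  fun l => if h : l < k then x ⟨l, h⟩ else 0

lemma ext0_lt {k : ℕ} (x : EuclideanSpace ℝ (Fin k)) {l : ℕ} (h : l < k) :
    ext0 x l = x ⟨l, h⟩ := dif_pos h

lemma ext0_coe {k : ℕ} (x : EuclideanSpace ℝ (Fin k)) (j : Fin k) :
    ext0 x (j : ℕ) = x j := by rw [ext0_lt x j.2]

lemma mem_body {k : ℕ} {a b : ℝ} {f : ℝ → ℝ} {hk : 0 < k+1}
    (x : EuclideanSpace ℝ (Fin (k+1))) :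
    x ∈ bodyOfRevolution (k+1) hk a b f ↔
      ext0 x 0 ∈ Set.Icc a b ∧
        ∑ l ∈ Finset.range k, (ext0 x (l+1)) ^ 2 ≤ f (ext0 x 0) ^ 2 := by
  have h0 : ext0 x 0 = x ⟨0, hk⟩ := ext0_lt x hk
  have hsum : ∑ i ∈ Finset.univ.filter (fun i : Fin (k+1) => 0 < (i:ℕ)), (x i)^2
      = ∑ l ∈ Finset.range k, (ext0 x (l+1)) ^ 2 := by
    rw [sum_filter_pos (fun i => (x i)^2)]
    rw [← Fin.sum_univ_eq_sum_range (fun l => (ext0 x (l+1))^2) k]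
    refine Finset.sum_congr rfl (fun j _ => ?_)
    rw [ext0_lt x (show (j:ℕ)+1 < k+1 by have := j.2; omega)]
    congr 1
  rw [bodyOfRevolution, Set.mem_setOf_eq, h0, hsum]

lemma image_delCoord1' (m : ℕ) (a b : ℝ) (f : ℝ → ℝ) :
    delCoord (⟨1, by omega⟩ : Fin (m+3)) '' bodyOfRevolution (m+3) (by omega) a b f
      = bodyOfRevolution (m+2) (by omega) a b f := by
  ext y
  simp only [Set.mem_image]
  constructor
  · rintro ⟨x, hx, rfl⟩
    rw [mem_body] at hx ⊢
    set y := delCoord (⟨1, by omega⟩ : Fin (m+3)) x with hy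
    have h0 : ext0 y 0 = ext0 x 0 := by
      rw [ext0_lt y (by omega : 0 < m+2), ext0_lt x (by omega : 0 < m+3)]
      simp [hy, delCoord]
    have hD : ∀ l, l < m+1 → ext0 y (l+1) = ext0 x (l+2) := by
      intro l hl
      rw [ext0_lt y (by omega : l+1 < m+2), ext0_lt x (by omega : l+2 < m+3)]
      simp only [hy, delCoord]
      rw [if_neg (by omega)]
    refine ⟨h0 ▸ hx.1, ?_⟩
    rw [h0]
    calc ∑ l ∈ Finset.range (m+1), ext0 y (l+1) ^ 2
        = ∑ l ∈ Finset.range (m+1), ext0 x (l+2) ^ 2 :=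
          Finset.sum_congr rfl (fun l hl => by rw [hD l (Finset.mem_range.1 hl)])
      _ ≤ ∑ l ∈ Finset.range (m+2), ext0 x (l+1) ^ 2 := by
          rw [Finset.sum_range_succ' (fun l => ext0 x (l+1) ^ 2) (m+1)]
          exact le_add_of_nonneg_right (sq_nonneg _)
      _ ≤ _ := hx.2
  · intro hy
    rw [mem_body] at hy
    set Z : ℕ → ℝ := fun l => if l = 0 then ext0 y 0 else if l = 1 then 0 else ext0 y (l-1)
      with hZ
    refine ⟨(WithLp.toLp 2 (fun i : Fin (m+3) => Z (i:ℕ)) : EuclideanSpace ℝ (Fin (m+3))), ?_, ?_⟩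
    · rw [mem_body]
      have h0 : ext0 (WithLp.toLp 2 (fun i : Fin (m+3) => Z (i:ℕ)) : EuclideanSpace ℝ (Fin (m+3))) 0 = ext0 y 0 := by
        rw [ext0_lt _ (by omega : 0 < m+3)]; simp [hZ]
      have hD : ∀ l, l < m+2 →
          ext0 (WithLp.toLp 2 (fun i : Fin (m+3) => Z (i:ℕ)) : EuclideanSpace ℝ (Fin (m+3))) (l+1) = Z (l+1) := by
        intro l hl; rw [ext0_lt _ (by omega : l+1 < m+3)]
      refine ⟨h0 ▸ hy.1, ?_⟩
      rw [h0]
      have hsc : ∑ l ∈ Finset.range (m+2),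
          (ext0 (WithLp.toLp 2 (fun i : Fin (m+3) => Z (i:ℕ)) : EuclideanSpace ℝ (Fin (m+3))) (l+1))^2
          = ∑ l ∈ Finset.range (m+2), (Z (l+1))^2 :=
        Finset.sum_congr rfl (fun l hl => by rw [hD l (Finset.mem_range.1 hl)])
      rw [hsc]
      rw [Finset.sum_range_succ' (fun l => Z (l+1) ^ 2) (m+1)]
      have hz1 : Z 1 = 0 := by simp [hZ]
      have hz2 : ∀ l, l < m+1 → Z (l+2) = ext0 y (l+1) := by
        intro l hl; simp only [hZ]; rw [if_neg (by omega), if_neg (by omega)]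
        rfl
      calc ∑ l ∈ Finset.range (m+1), Z (l+1+1) ^ 2 + Z (0+1) ^ 2
          = ∑ l ∈ Finset.range (m+1), ext0 y (l+1) ^ 2 := by
            rw [hz1]
            rw [Finset.sum_congr rfl (fun l hl => by
              rw [show l+1+1 = l+2 from rfl, hz2 l (Finset.mem_range.1 hl)])]
            norm_num
        _ ≤ _ := hy.2
    · ext j
      by_cases hj : (j : ℕ) < 1
      · simp only [delCoord, if_pos hj]
        show Z (j:ℕ) = y j
        have hj0 : (j : ℕ) = 0 := by omega
        rw [hj0]
        simp only [hZ, if_pos rfl]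
        rw [ext0_lt y (by omega : 0 < m+2)]
        exact congrArg y.ofLp (Fin.ext hj0.symm)
      · simp only [delCoord, if_neg hj]
        show Z ((j:ℕ)+1) = y j
        simp only [hZ]
        rw [if_neg (by omega), if_neg (by omega)]
        show ext0 y ((j:ℕ)+1-1) = y j
        rw [show (j:ℕ)+1-1 = (j:ℕ) from rfl]
        exact ext0_coe y j

lemma image_delCoord2' (m : ℕ) (a b : ℝ) (f : ℝ → ℝ) :
    delCoord (⟨2, by omega⟩ : Fin (m+3)) '' bodyOfRevolution (m+3) (by omega) a b f
      = bodyOfRevolution (m+2) (by omega) a b f := by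
  ext y
  simp only [Set.mem_image]
  constructor
  · rintro ⟨x, hx, rfl⟩
    rw [mem_body] at hx ⊢
    set y := delCoord (⟨2, by omega⟩ : Fin (m+3)) x with hy
    have h0 : ext0 y 0 = ext0 x 0 := by
      rw [ext0_lt y (by omega : 0 < m+2), ext0_lt x (by omega : 0 < m+3)]
      simp [hy, delCoord]
    have h1 : ext0 y 1 = ext0 x 1 := by
      rw [ext0_lt y (by omega : 1 < m+2), ext0_lt x (by omega : 1 < m+3)]
      simp only [hy, delCoord]
      rw [if_pos (by omega)]
    have hD : ∀ l, l < m → ext0 y (l+2) = ext0 x (l+3) := by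
      intro l hl
      rw [ext0_lt y (by omega : l+2 < m+2), ext0_lt x (by omega : l+3 < m+3)]
      simp only [hy, delCoord]
      rw [if_neg (by omega)]
    refine ⟨h0 ▸ hx.1, ?_⟩
    rw [h0]
    rw [Finset.sum_range_succ' (fun l => ext0 y (l+1) ^ 2) m]
    rw [Finset.sum_range_succ' (fun l => ext0 x (l+1) ^ 2) (m+1),
      Finset.sum_range_succ' (fun l => ext0 x (l+1+1) ^ 2) m] at hx
    have hsc : ∑ l ∈ Finset.range m, ext0 y (l+1+1) ^ 2
        = ∑ l ∈ Finset.range m, ext0 x (l+3) ^ 2 :=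
      Finset.sum_congr rfl (fun l hl => by rw [show l+1+1 = l+2 from rfl,
        hD l (Finset.mem_range.1 hl)])
    rw [hsc, h1]
    have := hx.2
    have hnn : (0:ℝ) ≤ ext0 x (0+1+1) ^ 2 := sq_nonneg _
    calc ∑ l ∈ Finset.range m, ext0 x (l+3) ^ 2 + ext0 x (0+1) ^ 2
        ≤ (∑ l ∈ Finset.range m, ext0 x (l+1+1+1) ^ 2 + ext0 x (0+1+1) ^ 2)
          + ext0 x (0+1) ^ 2 := by
          refine add_le_add_left (le_add_of_nonneg_right hnn) _
      _ ≤ _ := this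
  · intro hy
    rw [mem_body] at hy
    set Z : ℕ → ℝ := fun l => if l ≤ 1 then ext0 y l else if l = 2 then 0 else ext0 y (l-1)
      with hZ
    refine ⟨(WithLp.toLp 2 (fun i : Fin (m+3) => Z (i:ℕ)) : EuclideanSpace ℝ (Fin (m+3))), ?_, ?_⟩
    · rw [mem_body]
      have h0 : ext0 (WithLp.toLp 2 (fun i : Fin (m+3) => Z (i:ℕ)) : EuclideanSpace ℝ (Fin (m+3))) 0 = ext0 y 0 := by
        rw [ext0_lt _ (by omega : 0 < m+3)]; simp [hZ]
      have hD : ∀ l, l < m+2 →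
          ext0 (WithLp.toLp 2 (fun i : Fin (m+3) => Z (i:ℕ)) : EuclideanSpace ℝ (Fin (m+3))) (l+1) = Z (l+1) := by
        intro l hl; rw [ext0_lt _ (by omega : l+1 < m+3)]
      refine ⟨h0 ▸ hy.1, ?_⟩
      rw [h0]
      have hsc : ∑ l ∈ Finset.range (m+2),
          (ext0 (WithLp.toLp 2 (fun i : Fin (m+3) => Z (i:ℕ)) : EuclideanSpace ℝ (Fin (m+3))) (l+1))^2
          = ∑ l ∈ Finset.range (m+2), (Z (l+1))^2 :=
        Finset.sum_congr rfl (fun l hl => by rw [hD l (Finset.mem_range.1 hl)])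
      rw [hsc]
      rw [Finset.sum_range_succ' (fun l => Z (l+1) ^ 2) (m+1),
        Finset.sum_range_succ' (fun l => Z (l+1+1) ^ 2) m]
      have hz1 : Z (0+1) = ext0 y 1 := by simp [hZ]
      have hz2 : Z (0+1+1) = 0 := by simp [hZ]
      have hz3 : ∀ l, l < m → Z (l+1+1+1) = ext0 y (l+2) := by
        intro l hl; simp only [hZ]
        rw [if_neg (by omega), if_neg (by omega)]
        rfl
      have hsc2 : ∑ l ∈ Finset.range m, Z (l+1+1+1) ^ 2
          = ∑ l ∈ Finset.range m, ext0 y (l+2) ^ 2 :=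
        Finset.sum_congr rfl (fun l hl => by rw [hz3 l (Finset.mem_range.1 hl)])
      rw [hsc2, hz1, hz2]
      rw [Finset.sum_range_succ' (fun l => ext0 y (l+1) ^ 2) m] at hy
      have := hy.2
      calc ∑ l ∈ Finset.range m, ext0 y (l+2) ^ 2 + (0:ℝ)^2 + ext0 y 1 ^ 2
          = ∑ l ∈ Finset.range m, ext0 y (l+1+1) ^ 2 + ext0 y (0+1) ^ 2 := by norm_num
        _ ≤ _ := this
    · ext j
      by_cases hj : (j : ℕ) < 2
      · simp only [delCoord, if_pos hj]
        show Z (j:ℕ) = y j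
        simp only [hZ]
        rw [if_pos (by omega)]
        exact ext0_coe y j
      · simp only [delCoord, if_neg hj]
        show Z ((j:ℕ)+1) = y j
        simp only [hZ]
        rw [if_neg (by omega), if_neg (by omega)]
        show ext0 y ((j:ℕ)+1-1) = y j
        rw [show (j:ℕ)+1-1 = (j:ℕ) from rfl]
        exact ext0_coe y j

lemma image_delCoord23' (m : ℕ) (a b : ℝ) (f : ℝ → ℝ) :
    delCoord23 '' bodyOfRevolution (m+3) (by omega) a b f
      = bodyOfRevolution (m+1) (by omega) a b f := by
  ext y
  simp only [Set.mem_image]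
  constructor
  · rintro ⟨x, hx, rfl⟩
    rw [mem_body] at hx ⊢
    set y := delCoord23 (n := m+3) x with hy
    have h0 : ext0 y 0 = ext0 x 0 := by
      rw [ext0_lt y (by omega : 0 < m+1), ext0_lt x (by omega : 0 < m+3)]
      simp [hy, delCoord23]
    have hD : ∀ l, l < m → ext0 y (l+1) = ext0 x (l+3) := by
      intro l hl
      rw [ext0_lt y (by omega : l+1 < m+1), ext0_lt x (by omega : l+3 < m+3)]
      simp only [hy, delCoord23]
      rw [if_neg (by omega)]
    refine ⟨h0 ▸ hx.1, ?_⟩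
    rw [h0]
    have hsc : ∑ l ∈ Finset.range m, ext0 y (l+1) ^ 2
        = ∑ l ∈ Finset.range m, ext0 x (l+3) ^ 2 :=
      Finset.sum_congr rfl (fun l hl => by rw [hD l (Finset.mem_range.1 hl)])
    rw [hsc]
    rw [Finset.sum_range_succ' (fun l => ext0 x (l+1) ^ 2) (m+1),
      Finset.sum_range_succ' (fun l => ext0 x (l+1+1) ^ 2) m] at hx
    have := hx.2
    have hnn1 : (0:ℝ) ≤ ext0 x (0+1+1) ^ 2 := sq_nonneg _
    have hnn2 : (0:ℝ) ≤ ext0 x (0+1) ^ 2 := sq_nonneg _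
    calc ∑ l ∈ Finset.range m, ext0 x (l+3) ^ 2
        ≤ (∑ l ∈ Finset.range m, ext0 x (l+1+1+1) ^ 2 + ext0 x (0+1+1) ^ 2)
          + ext0 x (0+1) ^ 2 := by
          have : ∑ l ∈ Finset.range m, ext0 x (l+3) ^ 2
              = ∑ l ∈ Finset.range m, ext0 x (l+1+1+1) ^ 2 := rfl
          rw [this]; linarith
      _ ≤ _ := this
  · intro hy
    rw [mem_body] at hy
    set Z : ℕ → ℝ := fun l => if l = 0 then ext0 y 0 else if l ≤ 2 then 0 else ext0 y (l-2)
      with hZ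
    refine ⟨(WithLp.toLp 2 (fun i : Fin (m+3) => Z (i:ℕ)) : EuclideanSpace ℝ (Fin (m+3))), ?_, ?_⟩
    · rw [mem_body]
      have h0 : ext0 (WithLp.toLp 2 (fun i : Fin (m+3) => Z (i:ℕ)) : EuclideanSpace ℝ (Fin (m+3))) 0 = ext0 y 0 := by
        rw [ext0_lt _ (by omega : 0 < m+3)]; simp [hZ]
      have hD : ∀ l, l < m+2 →
          ext0 (WithLp.toLp 2 (fun i : Fin (m+3) => Z (i:ℕ)) : EuclideanSpace ℝ (Fin (m+3))) (l+1) = Z (l+1) := by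
        intro l hl; rw [ext0_lt _ (by omega : l+1 < m+3)]
      refine ⟨h0 ▸ hy.1, ?_⟩
      rw [h0]
      have hsc : ∑ l ∈ Finset.range (m+2),
          (ext0 (WithLp.toLp 2 (fun i : Fin (m+3) => Z (i:ℕ)) : EuclideanSpace ℝ (Fin (m+3))) (l+1))^2
          = ∑ l ∈ Finset.range (m+2), (Z (l+1))^2 :=
        Finset.sum_congr rfl (fun l hl => by rw [hD l (Finset.mem_range.1 hl)])
      rw [hsc]
      rw [Finset.sum_range_succ' (fun l => Z (l+1) ^ 2) (m+1),
        Finset.sum_range_succ' (fun l => Z (l+1+1) ^ 2) m]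
      have hz1 : Z (0+1) = 0 := by simp [hZ]
      have hz2 : Z (0+1+1) = 0 := by simp [hZ]
      have hz3 : ∀ l, l < m → Z (l+1+1+1) = ext0 y (l+1) := by
        intro l hl; simp only [hZ]
        rw [if_neg (by omega), if_neg (by omega)]
        rfl
      have hsc2 : ∑ l ∈ Finset.range m, Z (l+1+1+1) ^ 2
          = ∑ l ∈ Finset.range m, ext0 y (l+1) ^ 2 :=
        Finset.sum_congr rfl (fun l hl => by rw [hz3 l (Finset.mem_range.1 hl)])
      rw [hsc2, hz1, hz2]
      have := hy.2
      calc ∑ l ∈ Finset.range m, ext0 y (l+1) ^ 2 + (0:ℝ)^2 + (0:ℝ)^2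
          = ∑ l ∈ Finset.range m, ext0 y (l+1) ^ 2 := by norm_num
        _ ≤ _ := this
    · ext j
      by_cases hj : (j : ℕ) < 1
      · simp only [delCoord23, if_pos hj]
        show Z (j:ℕ) = y j
        have hj0 : (j : ℕ) = 0 := by omega
        rw [hj0]
        simp only [hZ, if_pos rfl]
        rw [ext0_lt y (by omega : 0 < m+1)]
        exact congrArg y.ofLp (Fin.ext hj0.symm)
      · simp only [delCoord23, if_neg hj]
        show Z ((j:ℕ)+2) = y j
        simp only [hZ]
        rw [if_neg (by omega), if_neg (by omega)]
        show ext0 y ((j:ℕ)+2-2) = y j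
        rw [show (j:ℕ)+2-2 = (j:ℕ) from rfl]
        exact ext0_coe y j

lemma hyperplane_null (k : ℕ) (r : ℝ) :
    volume {x : EuclideanSpace ℝ (Fin (k+1)) | x 0 = r} = 0 := by
  have hT : MeasurableSet (({r} : Set ℝ) ×ˢ (Set.univ : Set (EuclideanSpace ℝ (Fin k)))) :=
    (measurableSet_singleton r).prod MeasurableSet.univ
  have hpre : (fun x : EuclideanSpace ℝ (Fin (k+1)) =>
      ((x 0, WithLp.toLp 2 (fun j : Fin k => x j.succ)) : ℝ × EuclideanSpace ℝ (Fin k))) ⁻¹'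
      (({r} : Set ℝ) ×ˢ (Set.univ : Set (EuclideanSpace ℝ (Fin k))))
      = {x : EuclideanSpace ℝ (Fin (k+1)) | x 0 = r} := by
    ext x; simp [eq_comm]
  rw [← hpre, (mp_split k).measure_preimage hT.nullMeasurableSet,
    MeasureTheory.Measure.volume_eq_prod, Measure.prod_prod]
  simp

-- concave positive functions on [a,b] are bounded by 2 * f(midpoint) on (a,b)
lemma concave_bound {a b : ℝ} (hab : a < b) {f : ℝ → ℝ}
    (hconc : ConcaveOn ℝ (Set.Icc a b) f) (hpos : ∀ t ∈ Set.Icc a b, 0 < f t) :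
    ∀ t ∈ Set.Ioo a b, f t ≤ 2 * f ((a+b)/2) := by
  intro t ht
  set c := (a+b)/2 with hc
  have hcmem : c ∈ Set.Icc a b := ⟨by rw [hc]; linarith, by rw [hc]; linarith⟩
  have htmem : t ∈ Set.Icc a b := ⟨le_of_lt ht.1, le_of_lt ht.2⟩
  rcases le_or_gt t c with htc | htc
  · -- use t and b
    set lam := (b - c)/(b - t) with hlam
    have hbt : 0 < b - t := by linarith [ht.2]
    have hl1 : lam ≤ 1 := by rw [hlam, div_le_one hbt]; linarith
    have hl2 : (1:ℝ)/2 ≤ lam := by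
      rw [hlam, div_le_div_iff₀ (by norm_num) hbt]; rw [hc]; linarith [ht.1]
    have hl0 : 0 ≤ lam := by linarith
    have hcomb : lam * t + (1 - lam) * b = c := by
      rw [hlam, hc]; field_simp; ring
    have := hconc.2 htmem (Set.right_mem_Icc.2 (le_of_lt hab)) hl0
      (show (0:ℝ) ≤ 1 - lam by linarith) (show lam + (1 - lam) = 1 by ring)
    rw [smul_eq_mul, smul_eq_mul, smul_eq_mul, smul_eq_mul] at this
    rw [hcomb] at this
    have hfb : 0 < f b := hpos b (Set.right_mem_Icc.2 (le_of_lt hab))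
    have hft : 0 < f t := hpos t htmem
    nlinarith
  · -- use a and t
    set lam := (c - a)/(t - a) with hlam
    have hta : 0 < t - a := by linarith [ht.1]
    have hl1 : lam ≤ 1 := by rw [hlam, div_le_one hta]; linarith
    have hl2 : (1:ℝ)/2 ≤ lam := by
      rw [hlam, div_le_div_iff₀ (by norm_num) hta]; rw [hc]; linarith [ht.2]
    have hl0 : 0 ≤ lam := by linarith
    have hcomb : lam * t + (1 - lam) * a = c := by
      rw [hlam, hc]; field_simp; ring
    have := hconc.2 htmem (Set.left_mem_Icc.2 (le_of_lt hab)) hl0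
      (show (0:ℝ) ≤ 1 - lam by linarith) (show lam + (1 - lam) = 1 by ring)
    rw [smul_eq_mul, smul_eq_mul, smul_eq_mul, smul_eq_mul] at this
    rw [hcomb] at this
    have hfa : 0 < f a := hpos a (Set.left_mem_Icc.2 (le_of_lt hab))
    have hft : 0 < f t := hpos t htmem
    nlinarith


lemma volume_K (k : ℕ) (a b : ℝ) (hab : a < b) (f g : ℝ → ℝ) (hg : Measurable g)
    (hg0 : ∀ t, 0 ≤ g t) (hfg : ∀ t ∈ Set.Ioo a b, g t = f t) (hk : 0 < k + 1) :
    volume (bodyOfRevolution (k+1) hk a b f)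
      = ENNReal.ofReal (ballC k) * ∫⁻ t in Set.Ioo a b, (ENNReal.ofReal (g t)) ^ k := by
  rw [← volume_body k a b g hg hg0]
  set S := {x : EuclideanSpace ℝ (Fin (k+1)) | x 0 ∈ Set.Ioo a b ∧
      ∑ i ∈ Finset.univ.filter (fun i : Fin (k+1) => 0 < (i:ℕ)), (x i)^2 ≤ g (x 0) ^ 2}
    with hS
  have h00 : (⟨0, hk⟩ : Fin (k+1)) = 0 := by exact Fin.mk_zero ..
  apply le_antisymm
  · have hsub : bodyOfRevolution (k+1) hk a b f ⊆
        S ∪ ({x : EuclideanSpace ℝ (Fin (k+1)) | x 0 = a}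
          ∪ {x : EuclideanSpace ℝ (Fin (k+1)) | x 0 = b}) := by
      rintro x ⟨hx1, hx2⟩
      rw [h00] at hx1 hx2
      rcases eq_or_lt_of_le hx1.1 with heq | hlt
      · exact Or.inr (Or.inl heq.symm)
      rcases eq_or_lt_of_le hx1.2 with heq | hlt2
      · exact Or.inr (Or.inr heq)
      refine Or.inl ⟨⟨hlt, hlt2⟩, ?_⟩
      rw [hfg (x 0) ⟨hlt, hlt2⟩]
      exact hx2
    calc volume (bodyOfRevolution (k+1) hk a b f)
        ≤ volume (S ∪ ({x : EuclideanSpace ℝ (Fin (k+1)) | x 0 = a}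
          ∪ {x : EuclideanSpace ℝ (Fin (k+1)) | x 0 = b})) := measure_mono hsub
      _ ≤ volume S + volume ({x : EuclideanSpace ℝ (Fin (k+1)) | x 0 = a}
          ∪ {x : EuclideanSpace ℝ (Fin (k+1)) | x 0 = b}) := measure_union_le _ _
      _ ≤ volume S + (volume {x : EuclideanSpace ℝ (Fin (k+1)) | x 0 = a}
          + volume {x : EuclideanSpace ℝ (Fin (k+1)) | x 0 = b}) :=
          add_le_add_right (measure_union_le _ _) _
      _ = volume S := by rw [hyperplane_null, hyperplane_null]; simp
  · apply measure_mono
    rintro x ⟨hx1, hx2⟩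
    refine ⟨?_, ?_⟩
    · rw [h00]; exact ⟨le_of_lt hx1.1, le_of_lt hx1.2⟩
    · rw [h00, ← hfg (x 0) hx1]; exact hx2

end Aux

/-- Proposition 4.1: for a rotation invariant convex body `K_f`, the projection
inequality `(n/(n−1))·vol_{n−2}(K_f | (e₂,e₃)^⊥)·vol_n(K_f) > vol_{n−1}(K_f | e₂^⊥)·vol_{n−1}(K_f | e₃^⊥)`
holds. -/
theorem bodyOfRevolution_projection_inequality (n : ℕ) (hn : 3 ≤ n)
    (a b : ℝ) (hab : a < b) (f : ℝ → ℝ)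
    (hconc : ConcaveOn ℝ (Set.Icc a b) f)
    (hpos : ∀ t ∈ Set.Icc a b, 0 < f t) :
    (volume (delCoord (⟨1, by omega⟩ : Fin n) ''
        bodyOfRevolution n (by omega) a b f)).toReal *
      (volume (delCoord (⟨2, by omega⟩ : Fin n) ''
        bodyOfRevolution n (by omega) a b f)).toReal <
    ((n : ℝ) / ((n : ℝ) - 1)) *
      (volume (delCoord23 '' bodyOfRevolution n (by omega) a b f)).toReal *
      (volume (bodyOfRevolution n (by omega) a b f)).toReal := by
  obtain ⟨m, rfl⟩ : ∃ m, n = m + 3 := ⟨n - 3, by omega⟩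
  classical
  -- measurable extension of f
  have hconc' : ConcaveOn ℝ (Set.Ioo a b) f :=
    hconc.subset Set.Ioo_subset_Icc_self (convex_Ioo a b)
  have hcont : ContinuousOn f (Set.Ioo a b) := hconc'.continuousOn isOpen_Ioo
  set g : ℝ → ℝ := (Set.Ioo a b).piecewise f (fun _ => 0) with hgdef
  have hgm : Measurable g :=
    ContinuousOn.measurable_piecewise hcont continuousOn_const measurableSet_Ioo
  have hg0 : ∀ t, 0 ≤ g t := by
    intro t
    by_cases h : t ∈ Set.Ioo a b
    · rw [hgdef, Set.piecewise_eq_of_mem _ _ _ h]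
      exact (hpos t (Set.Ioo_subset_Icc_self h)).le
    · rw [hgdef, Set.piecewise_eq_of_notMem _ _ _ h]
  have hfg : ∀ t ∈ Set.Ioo a b, g t = f t := fun t ht => Set.piecewise_eq_of_mem _ _ _ ht
  set J : ℕ → ENNReal := fun k => ∫⁻ t in Set.Ioo a b, (ENNReal.ofReal (g t)) ^ k with hJ
  -- volumes of the three bodies
  have hV1 : (volume : Measure (EuclideanSpace ℝ (Fin (m+3-2))))
        (bodyOfRevolution (m+1) (by omega) a b f)
      = ENNReal.ofReal (ballC m) * J m := volume_K m a b hab f g hgm hg0 hfg (by omega)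
  have hV2 : (volume : Measure (EuclideanSpace ℝ (Fin (m+3-1))))
        (bodyOfRevolution (m+2) (by omega) a b f)
      = ENNReal.ofReal (ballC (m+1)) * J (m+1) :=
    volume_K (m+1) a b hab f g hgm hg0 hfg (by omega)
  have hV3 : (volume : Measure (EuclideanSpace ℝ (Fin (m+3))))
        (bodyOfRevolution (m+3) (by omega) a b f)
      = ENNReal.ofReal (ballC (m+2)) * J (m+2) :=
    volume_K (m+2) a b hab f g hgm hg0 hfg (by omega)
  rw [image_delCoord1' m a b f, image_delCoord2' m a b f, image_delCoord23' m a b f,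
    hV1, hV2, hV3]
  -- bound for g
  set M : ℝ := 2 * f ((a+b)/2) with hM
  have hmidIcc : (a+b)/2 ∈ Set.Icc a b := ⟨by linarith, by linarith⟩
  have hM0 : 0 < M := by
    rw [hM]; have := hpos _ hmidIcc; linarith
  have hgM : ∀ t, g t ≤ M := by
    intro t
    by_cases h : t ∈ Set.Ioo a b
    · rw [hgdef, Set.piecewise_eq_of_mem _ _ _ h]
      exact concave_bound hab hconc hpos t h
    · rw [hgdef, Set.piecewise_eq_of_notMem _ _ _ h]; exact hM0.le
  -- finiteness and positivity of the integrals
  have hJfin : ∀ k, J k ≠ ⊤ := by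
    intro k
    have hle : J k ≤ (ENNReal.ofReal M) ^ k * volume (Set.Ioo a b) := by
      rw [hJ]
      calc ∫⁻ t in Set.Ioo a b, (ENNReal.ofReal (g t)) ^ k
          ≤ ∫⁻ _t in Set.Ioo a b, (ENNReal.ofReal M) ^ k :=
            lintegral_mono (fun t =>
              pow_le_pow_left₀ zero_le (ENNReal.ofReal_le_ofReal (hgM t)) k)
        _ = (ENNReal.ofReal M) ^ k * volume (Set.Ioo a b) := setLIntegral_const _ _
    exact ne_top_of_le_ne_top
      (ENNReal.mul_ne_top (ENNReal.pow_ne_top ENNReal.ofReal_ne_top)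
        (by rw [Real.volume_Ioo]; exact ENNReal.ofReal_ne_top)) hle
  have hJpos : ∀ k, 0 < J k := by
    intro k
    rw [hJ]
    rw [lintegral_pos_iff_support ((Measurable.ennreal_ofReal hgm).pow_const k)]
    have hsupp : Set.Ioo a b ⊆ Function.support (fun t => (ENNReal.ofReal (g t)) ^ k) := by
      intro t ht
      have : 0 < g t := by rw [hfg t ht]; exact hpos t (Set.Ioo_subset_Icc_self ht)
      exact pow_ne_zero k (by simpa using (ENNReal.ofReal_pos.2 this).ne')
    calc (0:ENNReal) < volume (Set.Ioo a b) := by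
          rw [Real.volume_Ioo]; exact ENNReal.ofReal_pos.2 (by linarith)
      _ = (volume.restrict (Set.Ioo a b)) (Set.Ioo a b) := by
          rw [Measure.restrict_apply_self]
      _ ≤ _ := measure_mono hsupp
  -- Cauchy-Schwarz
  have hCS : J (m+1) ≤ (J m) ^ ((1:ℝ)/2) * (J (m+2)) ^ ((1:ℝ)/2) := by
    have hpq : Real.HolderConjugate 2 2 := Real.HolderConjugate.two_two
    set F : ℝ → ENNReal := fun t => ENNReal.ofReal (g t) ^ ((m:ℝ)/2) with hF
    set G : ℝ → ENNReal := fun t => ENNReal.ofReal (g t) ^ (((m:ℝ)+2)/2) with hG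
    have hFm : Measurable F := (Measurable.ennreal_ofReal hgm).pow_const _
    have hGm : Measurable G := (Measurable.ennreal_ofReal hgm).pow_const _
    have h := ENNReal.lintegral_mul_le_Lp_mul_Lq (volume.restrict (Set.Ioo a b)) hpq
      hFm.aemeasurable hGm.aemeasurable
    have hFG : ∀ t, (F * G) t = (ENNReal.ofReal (g t)) ^ (m+1) := by
      intro t
      rw [Pi.mul_apply, hF, hG, ← ENNReal.rpow_add_of_nonneg _ _ (by positivity) (by positivity)]
      rw [show (m:ℝ)/2 + ((m:ℝ)+2)/2 = ((m:ℕ):ℝ) + 1 by push_cast; ring]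
      rw [show ((m:ℕ):ℝ) + 1 = ((m+1 : ℕ):ℝ) by push_cast; ring]
      exact ENNReal.rpow_natCast _ _
    have hF2 : ∀ t, F t ^ (2:ℝ) = (ENNReal.ofReal (g t)) ^ m := by
      intro t
      rw [hF, ← ENNReal.rpow_natCast (ENNReal.ofReal (g t)) m, ← ENNReal.rpow_mul]
      norm_num
    have hG2 : ∀ t, G t ^ (2:ℝ) = (ENNReal.ofReal (g t)) ^ (m+2) := by
      intro t
      rw [hG, ← ENNReal.rpow_natCast (ENNReal.ofReal (g t)) (m+2), ← ENNReal.rpow_mul]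
      push_cast
      norm_num
    rw [lintegral_congr hFG, lintegral_congr hF2, lintegral_congr hG2] at h
    rw [hJ]
    simpa using h
  -- pass to real numbers
  set r3 : ℝ := (J m).toReal with hr3
  set r2 : ℝ := (J (m+1)).toReal with hr2
  set r1 : ℝ := (J (m+2)).toReal with hr1
  have hr3p : 0 < r3 := ENNReal.toReal_pos (hJpos m).ne' (hJfin m)
  have hr2p : 0 < r2 := ENNReal.toReal_pos (hJpos (m+1)).ne' (hJfin (m+1))
  have hr1p : 0 < r1 := ENNReal.toReal_pos (hJpos (m+2)).ne' (hJfin (m+2))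
  have hCSr : r2 ≤ Real.sqrt r3 * Real.sqrt r1 := by
    have hne : (J m) ^ ((1:ℝ)/2) * (J (m+2)) ^ ((1:ℝ)/2) ≠ ⊤ :=
      ENNReal.mul_ne_top (ENNReal.rpow_ne_top_of_nonneg (by norm_num) (hJfin m))
        (ENNReal.rpow_ne_top_of_nonneg (by norm_num) (hJfin (m+2)))
    have := ENNReal.toReal_mono hne hCS
    rw [ENNReal.toReal_mul, ← ENNReal.toReal_rpow, ← ENNReal.toReal_rpow] at this
    rw [hr2, hr3, hr1, Real.sqrt_eq_rpow, Real.sqrt_eq_rpow]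
    exact this
  have hsq : r2 * r2 ≤ r3 * r1 := by
    have h1 : r2 * r2 ≤ (Real.sqrt r3 * Real.sqrt r1) * (Real.sqrt r3 * Real.sqrt r1) :=
      mul_le_mul hCSr hCSr hr2p.le (by positivity)
    have h2 : Real.sqrt r3 * Real.sqrt r3 = r3 := Real.mul_self_sqrt hr3p.le
    have h3 : Real.sqrt r1 * Real.sqrt r1 = r1 := Real.mul_self_sqrt hr1p.le
    nlinarith
  -- final arithmetic
  rw [ENNReal.toReal_mul, ENNReal.toReal_mul, ENNReal.toReal_mul]
  rw [ENNReal.toReal_ofReal (ballC_pos m).le, ENNReal.toReal_ofReal (ballC_pos (m+1)).le,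
    ENNReal.toReal_ofReal (ballC_pos (m+2)).le]
  rw [← hr2, ← hr3, ← hr1]
  push_cast
  rw [show ((m:ℝ)+3)-1 = (m:ℝ)+2 by ring]
  have hkey := mul_lt_mul_of_pos_right (ballC_ineq m) (mul_pos hr3p hr1p)
  have hkey2 := mul_le_mul_of_nonneg_left hsq
    (mul_nonneg (ballC_pos (m+1)).le (ballC_pos (m+1)).le)
  nlinarith [hkey, hkey2, ballC_pos m, ballC_pos (m+1), ballC_pos (m+2), hr2p, hr3p, hr1p]
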